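/- Let d ≥ 1 be an integer and q₀ > 3 a real number. Then for all a, b ∈ ℝ^d: |a+b|^{q₀} − |a|^{q₀} − q₀·|a|^{q₀−2}·⟨a,b⟩ ≤ q₀(q₀−1)·2^{q₀−4}·(|a|^{q₀−2}·|b|² + |b|^{q₀}). -/

import Mathlib

open Set

lemma taylor2_le {f f' f'' : ℝ → ℝ} {x₀ x M : ℝ} (hlt : x₀ < x)
    (hf : ∀ t ∈ Icc x₀ x, HasDerivAt f (f' t) t)
    (hf' : ∀ t ∈ Icc x₀ x, HasDerivAt f' (f'' t) t)
    (hM : ∀ t ∈ Ioo x₀ x, f'' t ≤ M) :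
    f x ≤ f x₀ + f' x₀ * (x - x₀) + M / 2 * (x - x₀) ^ 2 := by
  have hud : UniqueDiffOn ℝ (Icc x₀ x) := uniqueDiffOn_Icc hlt
  have hd1 : ∀ t ∈ Icc x₀ x, derivWithin f (Icc x₀ x) t = f' t := fun t ht =>
    (hf t ht).hasDerivWithinAt.derivWithin (hud t ht)
  have hcd : ContDiffOn ℝ 1 f (Icc x₀ x) := by
    rw [← zero_add (1 : WithTop ℕ∞), contDiffOn_succ_iff_derivWithin hud]
    refine ⟨fun t ht => (hf t ht).differentiableAt.differentiableWithinAt, by simp, ?_⟩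
    rw [contDiffOn_zero]
    exact ContinuousOn.congr (fun t ht => (hf' t ht).continuousAt.continuousWithinAt)
      fun t ht => hd1 t ht
  have hone : ∀ t ∈ Icc x₀ x, iteratedDerivWithin 1 f (Icc x₀ x) t = f' t := fun t ht => by
    rw [iteratedDerivWithin_one]; exact hd1 t ht
  have hdiff : DifferentiableOn ℝ (iteratedDerivWithin 1 f (Icc x₀ x)) (Ioo x₀ x) := by
    intro t ht
    have ht' : t ∈ Icc x₀ x := Ioo_subset_Icc_self ht
    exact ((hf' t ht').differentiableAt.differentiableWithinAt).congr
      (fun y hy => hone y (Ioo_subset_Icc_self hy)) (hone t ht')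
  obtain ⟨x', hx', heq⟩ := taylor_mean_remainder_lagrange (n := 1) hlt.ne
    (by rwa [uIcc_of_le hlt.le]) (by rwa [uIcc_of_le hlt.le, uIoo_of_le hlt.le])
  rw [uIoo_of_le hlt.le] at hx'
  rw [uIcc_of_le hlt.le] at heq
  have h2 : iteratedDerivWithin (1+1) f (Icc x₀ x) x' = f'' x' := by
    have hx'' : x' ∈ Icc x₀ x := Ioo_subset_Icc_self hx'
    rw [iteratedDerivWithin_succ]
    rw [derivWithin_congr (fun y hy => hone y hy) (hone x' hx'')]
    exact (hf' x' hx'').hasDerivWithinAt.derivWithin (hud x' hx'')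
  rw [taylor_within_apply] at heq
  simp [Finset.sum_range_succ, iteratedDerivWithin_zero, h2,
    iteratedDerivWithin_one] at heq
  rw [hd1 x₀ (left_mem_Icc.2 hlt.le)] at heq
  have hb := hM x' hx'
  nlinarith [sq_nonneg (x - x₀), heq]

lemma taylor2_le' {f f' f'' : ℝ → ℝ} {x₀ x M : ℝ} (hlt : x₀ < x)
    (hf : ∀ t ∈ Icc x₀ x, HasDerivAt f (f' t) t)
    (hf' : ∀ t ∈ Icc x₀ x, HasDerivAt f' (f'' t) t)
    (hM : ∀ t ∈ Ioo x₀ x, f'' t ≤ M) :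
    f x₀ ≤ f x + f' x * (x₀ - x) + M / 2 * (x - x₀) ^ 2 := by
  have hmem : ∀ t ∈ Icc x₀ x, x₀ + x - t ∈ Icc x₀ x := by
    intro t ht; exact ⟨by linarith [ht.2], by linarith [ht.1]⟩
  have key := taylor2_le (f := fun t => f (x₀ + x - t)) (f' := fun t => -f' (x₀ + x - t))
      (f'' := fun t => f'' (x₀ + x - t)) (x₀ := x₀) (x := x) (M := M) hlt
    (fun t ht => by
      have h1 : HasDerivAt (fun u : ℝ => x₀ + x - u) (-1) t := by
        simpa using (hasDerivAt_id t).const_sub (x₀ + x)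
      simpa [Function.comp_def] using (hf _ (hmem t ht)).comp t h1)
    (fun t ht => by
      have h1 : HasDerivAt (fun u : ℝ => x₀ + x - u) (-1) t := by
        simpa using (hasDerivAt_id t).const_sub (x₀ + x)
      have := ((hf' _ (hmem t ht)).comp t h1).neg
      simpa [Function.comp_def, Pi.neg_def] using this)
    (fun t ht => by
      have : x₀ + x - t ∈ Ioo x₀ x := ⟨by linarith [ht.2], by linarith [ht.1]⟩
      exact hM _ this)
  simp only [add_sub_cancel_left, sub_self, add_sub_cancel_right] at key
  have h1 : f' x * (x₀ - x) = -f' x * (x - x₀) := by ring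
  rw [h1]; exact key

lemma rpow_taylor_upper {q x₀ x : ℝ} (hq : 2 ≤ q) (h0 : 0 < x₀) (hlt : x₀ < x) :
    x ^ q ≤ x₀ ^ q + q * x₀ ^ (q - 1) * (x - x₀) + q * (q - 1) / 2 * x ^ (q - 2) * (x - x₀) ^ 2 := by
  have key := taylor2_le (f := fun u : ℝ => u ^ q) (f' := fun t => q * t ^ (q - 1))
      (f'' := fun t => q * (q - 1) * t ^ (q - 2)) (M := q * (q - 1) * x ^ (q - 2)) hlt
    (fun t ht => by
      have ht0 : (0:ℝ) < t := lt_of_lt_of_le h0 ht.1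
      exact Real.hasDerivAt_rpow_const (Or.inl ht0.ne'))
    (fun t ht => by
      have ht0 : (0:ℝ) < t := lt_of_lt_of_le h0 ht.1
      have h := (Real.hasDerivAt_rpow_const (p := q - 1) (Or.inl ht0.ne')).const_mul q
      have e : q - 1 - 1 = q - 2 := by ring
      rw [e] at h
      simpa [mul_assoc] using h)
    (fun t ht => by
      have ht0 : (0:ℝ) < t := lt_of_lt_of_le h0 ht.1.le
      have h : t ^ (q-2) ≤ x ^ (q-2) := Real.rpow_le_rpow ht0.le ht.2.le (by linarith)
      exact mul_le_mul_of_nonneg_left h (by nlinarith))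
  have e : q * (q - 1) / 2 * x ^ (q - 2) * (x - x₀) ^ 2
      = q * (q - 1) * x ^ (q - 2) / 2 * (x - x₀) ^ 2 := by ring
  rw [e]; exact key

lemma rpow_taylor_lower {q x₀ x : ℝ} (hq : 2 ≤ q) (h0 : 0 < x₀) (hlt : x₀ < x) :
    x₀ ^ q ≤ x ^ q + q * x ^ (q - 1) * (x₀ - x) + q * (q - 1) / 2 * x ^ (q - 2) * (x - x₀) ^ 2 := by
  have key := taylor2_le' (f := fun u : ℝ => u ^ q) (f' := fun t => q * t ^ (q - 1))
      (f'' := fun t => q * (q - 1) * t ^ (q - 2)) (M := q * (q - 1) * x ^ (q - 2)) hlt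
    (fun t ht => by
      have ht0 : (0:ℝ) < t := lt_of_lt_of_le h0 ht.1
      exact Real.hasDerivAt_rpow_const (Or.inl ht0.ne'))
    (fun t ht => by
      have ht0 : (0:ℝ) < t := lt_of_lt_of_le h0 ht.1
      have h := (Real.hasDerivAt_rpow_const (p := q - 1) (Or.inl ht0.ne')).const_mul q
      have e : q - 1 - 1 = q - 2 := by ring
      rw [e] at h
      simpa [mul_assoc] using h)
    (fun t ht => by
      have ht0 : (0:ℝ) < t := lt_of_lt_of_le h0 ht.1.le
      have h : t ^ (q-2) ≤ x ^ (q-2) := Real.rpow_le_rpow ht0.le ht.2.le (by linarith)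
      exact mul_le_mul_of_nonneg_left h (by nlinarith))
  have e : q * (q - 1) / 2 * x ^ (q - 2) * (x - x₀) ^ 2
      = q * (q - 1) * x ^ (q - 2) / 2 * (x - x₀) ^ 2 := by ring
  rw [e]; exact key

lemma add_rpow_le_two_rpow_mul {r s p : ℝ} (hr : 0 ≤ r) (hs : 0 ≤ s) (hp : 1 ≤ p) :
    (r + s) ^ p ≤ 2 ^ (p - 1) * (r ^ p + s ^ p) := by
  have h := NNReal.rpow_add_le_mul_rpow_add_rpow r.toNNReal s.toNNReal hp
  have h' := (NNReal.coe_le_coe).2 h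
  rw [NNReal.coe_rpow, NNReal.coe_mul, NNReal.coe_rpow, NNReal.coe_add, NNReal.coe_add,
    NNReal.coe_rpow, NNReal.coe_rpow] at h'
  norm_num at h'
  rwa [sup_of_le_left hr, sup_of_le_left hs] at h'

lemma half_le_rpow {q : ℝ} (hq : 3 < q) : (1:ℝ)/2 ≤ (2:ℝ) ^ (q - 4) := by
  have h2 : (2:ℝ) ^ (-1:ℝ) ≤ (2:ℝ) ^ (q - 4) :=
    Real.rpow_le_rpow_of_exponent_le (by norm_num) (by linarith)
  rw [Real.rpow_neg_one] at h2
  linarith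

lemma endpoint1 {q r s : ℝ} (hq : 3 < q) (hr : 0 < r) (hs : 0 < s) :
    (r + s) ^ q - q * r ^ (q - 1) * s ≤
      r ^ q + q * (q - 1) * (2:ℝ) ^ (q - 4) * (r ^ (q - 2) * s ^ 2 + s ^ q) := by
  have ht := rpow_taylor_upper (q := q) (by linarith) hr (by linarith : r < r + s)
  rw [add_sub_cancel_left] at ht
  have hs2 : s ^ (q - 2) * s ^ 2 = s ^ q := by
    rw [← Real.rpow_natCast s 2, ← Real.rpow_add hs]
    norm_num
  have hmean : (r + s) ^ (q - 2) ≤ 2 ^ (q - 2 - 1) * (r ^ (q - 2) + s ^ (q - 2)) :=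
    add_rpow_le_two_rpow_mul hr.le hs.le (by linarith)
  have h23 : (2:ℝ) ^ (q - 2 - 1) = 2 * 2 ^ (q - 4) := by
    rw [show q - 2 - 1 = (q - 4) + 1 by ring, Real.rpow_add_one (by norm_num : (2:ℝ) ≠ 0)]
    ring
  rw [h23] at hmean
  have hq0 : (0:ℝ) ≤ q * (q - 1) / 2 * s ^ 2 := by
    have : (0:ℝ) < q * (q - 1) / 2 := by nlinarith
    exact mul_nonneg this.le (sq_nonneg s)
  have hstep : q * (q - 1) / 2 * (r + s) ^ (q - 2) * s ^ 2 ≤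
      q * (q - 1) * 2 ^ (q - 4) * (r ^ (q - 2) * s ^ 2 + s ^ q) := by
    have h1 : q * (q - 1) / 2 * (r + s) ^ (q - 2) * s ^ 2
        = (q * (q - 1) / 2 * s ^ 2) * (r + s) ^ (q - 2) := by ring
    rw [h1]
    calc (q * (q - 1) / 2 * s ^ 2) * (r + s) ^ (q - 2)
        ≤ (q * (q - 1) / 2 * s ^ 2) * (2 * 2 ^ (q - 4) * (r ^ (q - 2) + s ^ (q - 2))) :=
          mul_le_mul_of_nonneg_left hmean hq0
      _ = q * (q - 1) * 2 ^ (q - 4) * (r ^ (q - 2) * s ^ 2 + s ^ q) := by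
          rw [← hs2]; ring
  linarith [ht, hstep]

lemma endpoint2 {q r s : ℝ} (hq : 3 < q) (hr : 0 < r) (hs : 0 < s) :
    |r - s| ^ q + q * r ^ (q - 1) * s ≤
      r ^ q + q * (q - 1) * (2:ℝ) ^ (q - 4) * (r ^ (q - 2) * s ^ 2 + s ^ q) := by
  have hC2 : q * (q - 1) / 2 ≤ q * (q - 1) * (2:ℝ) ^ (q - 4) := by
    have h := half_le_rpow hq
    have h' := mul_le_mul_of_nonneg_left h (show (0:ℝ) ≤ q * (q - 1) by nlinarith)
    linarith
  have hCq : q ≤ q * (q - 1) * (2:ℝ) ^ (q - 4) := by nlinarith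
  have hC1 : 1 ≤ q * (q - 1) * (2:ℝ) ^ (q - 4) := by linarith
  rcases lt_or_ge s r with hsr | hrs
  · -- s < r
    have habs : |r - s| = r - s := abs_of_pos (by linarith)
    have ht := rpow_taylor_lower (q := q) (by linarith) (show (0:ℝ) < r - s by linarith)
      (show r - s < r by linarith)
    rw [show r - s - r = -s by ring, show r - (r - s) = s by ring] at ht
    rw [habs]
    have h1 : q * (q - 1) / 2 * (r ^ (q - 2) * s ^ 2) ≤
        q * (q - 1) * 2 ^ (q - 4) * (r ^ (q - 2) * s ^ 2) :=
      mul_le_mul_of_nonneg_right hC2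
        (mul_nonneg (Real.rpow_nonneg hr.le _) (sq_nonneg s))
    have h2 : (0:ℝ) ≤ q * (q - 1) * 2 ^ (q - 4) * s ^ q := by
      have := Real.rpow_nonneg hs.le q
      nlinarith
    nlinarith [ht, h1, h2]
  · -- r ≤ s
    have habs : |r - s| = s - r := by rw [abs_sub_comm, abs_of_nonneg (by linarith)]
    have h1 : (s - r) ^ q ≤ s ^ q := Real.rpow_le_rpow (by linarith) (by linarith) (by linarith)
    have hr1 : r ^ (q - 1) = r ^ (q - 2) * r := by
      rw [show q - 1 = q - 2 + 1 by ring, Real.rpow_add_one hr.ne']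
    have ha : r ^ (q - 2) * r ≤ r ^ (q - 2) * s :=
      mul_le_mul_of_nonneg_left hrs (Real.rpow_nonneg hr.le _)
    have h2 : q * r ^ (q - 1) * s ≤ q * (r ^ (q - 2) * s ^ 2) := by
      rw [hr1]
      calc q * (r ^ (q - 2) * r) * s ≤ q * (r ^ (q - 2) * s) * s := by
            have hqs : (0:ℝ) ≤ q * s := by positivity
            nlinarith [mul_le_mul_of_nonneg_left ha (by positivity : (0:ℝ) ≤ q), hs]
        _ = q * (r ^ (q - 2) * s ^ 2) := by ring
    have h3 : (0:ℝ) ≤ r ^ (q - 2) * s ^ 2 :=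
      mul_nonneg (Real.rpow_nonneg hr.le _) (sq_nonneg s)
    have h4 : (0:ℝ) ≤ s ^ q := Real.rpow_nonneg hs.le q
    have h5 : (0:ℝ) ≤ r ^ q := Real.rpow_nonneg hr.le q
    rw [habs]
    nlinarith [mul_le_mul_of_nonneg_right (sub_nonneg.2 hCq) h3,
      mul_le_mul_of_nonneg_right (sub_nonneg.2 hC1) h4]

open RealInnerProductSpace

/-- Inequality (eq:biprdt_mvt) of the paper, case `q₀ > 3`. -/
theorem stmt_2 (d : ℕ) (hd : 1 ≤ d) (q₀ : ℝ) (hq₀ : 3 < q₀)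
    (a b : EuclideanSpace ℝ (Fin d)) :
    ‖a + b‖ ^ q₀ - ‖a‖ ^ q₀ - q₀ * ‖a‖ ^ (q₀ - 2) * ⟪a, b⟫ ≤
      q₀ * (q₀ - 1) * (2:ℝ) ^ (q₀ - 4) * (‖a‖ ^ (q₀ - 2) * ‖b‖ ^ 2 + ‖b‖ ^ q₀) := by
  have hCpos : (0:ℝ) < q₀ * (q₀ - 1) * (2:ℝ) ^ (q₀ - 4) := by
    have h0 := Real.rpow_pos_of_pos (show (0:ℝ) < 2 by norm_num) (q₀ - 4)
    have h1 : (0:ℝ) < q₀ * (q₀ - 1) := by nlinarith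
    exact mul_pos h1 h0
  rcases eq_or_ne b 0 with hb | hb
  · simp only [hb, add_zero, inner_zero_right, mul_zero, sub_zero, sub_self, norm_zero]
    rw [Real.zero_rpow (by linarith : q₀ ≠ 0)]
    have h1 : (0:ℝ) ^ (2:ℕ) = 0 := by norm_num
    rw [h1]
    positivity
  rcases eq_or_ne a 0 with ha | ha
  · simp only [ha, zero_add, inner_zero_left, mul_zero, sub_zero, norm_zero]
    rw [Real.zero_rpow (by linarith : q₀ ≠ 0), Real.zero_rpow (by intro h; nlinarith [h] : q₀ - 2 ≠ 0)]
    simp only [zero_mul, sub_zero, mul_zero, zero_add]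
    have hC1 : 1 ≤ q₀ * (q₀ - 1) * (2:ℝ) ^ (q₀ - 4) := by
      have h := half_le_rpow hq₀
      have h' := mul_le_mul_of_nonneg_left h (show (0:ℝ) ≤ q₀ * (q₀ - 1) by nlinarith)
      nlinarith [h']
    nlinarith [Real.rpow_nonneg (norm_nonneg b) q₀,
      mul_le_mul_of_nonneg_right hC1 (Real.rpow_nonneg (norm_nonneg b) q₀)]
  have hr : 0 < ‖a‖ := norm_pos_iff.mpr ha
  have hs : 0 < ‖b‖ := norm_pos_iff.mpr hb
  set r := ‖a‖ with hrdef
  set s := ‖b‖ with hsdef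
  set c := (⟪a, b⟫ : ℝ) with hcdef
  -- convexity in the inner product variable
  set g : ℝ →ᵃ[ℝ] ℝ := AffineMap.lineMap (r^2+s^2) (r^2+s^2+2) with hgdef
  have hgval : ∀ x : ℝ, g x = r^2+s^2+2*x := by
    intro x
    simp [hgdef, AffineMap.lineMap_apply, smul_eq_mul]
    ring
  set D : Set ℝ := Set.Icc (-(r*s)) (r*s) with hDdef
  have hsub : D ⊆ g ⁻¹' (Set.Ici 0) := by
    intro x hx
    simp only [Set.mem_preimage, Set.mem_Ici, hgval]
    have h1 := hx.1
    nlinarith [sq_nonneg (r - s)]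
  have hconv1 : ConvexOn ℝ D ((fun x : ℝ => x ^ (q₀/2)) ∘ g) :=
    ((convexOn_rpow (by linarith : 1 ≤ q₀/2)).comp_affineMap g).subset hsub (convex_Icc _ _)
  have hlin : ConvexOn ℝ D (fun x : ℝ => -(q₀ * r^(q₀-2)) * x) :=
    ⟨convex_Icc _ _, fun x _ y _ α β hα hβ hαβ => le_of_eq (by simp [smul_eq_mul]; ring)⟩
  have hconv : ConvexOn ℝ D
      (fun x : ℝ => ((fun y : ℝ => y ^ (q₀/2)) ∘ g) x + -(q₀ * r^(q₀-2)) * x) :=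
    hconv1.add hlin
  set F : ℝ → ℝ := fun x : ℝ => ((fun y : ℝ => y ^ (q₀/2)) ∘ g) x + -(q₀ * r^(q₀-2)) * x
    with hFdef
  have hrs0 : (0:ℝ) ≤ r * s := by positivity
  have hcs : |c| ≤ r * s := abs_real_inner_le_norm a b
  obtain ⟨hc1, hc2⟩ := abs_le.mp hcs
  have hmem1 : -(r*s) ∈ D := by constructor <;> simp <;> linarith
  have hmem2 : r*s ∈ D := by constructor <;> simp <;> linarith
  have hcseg : c ∈ segment ℝ (-(r*s)) (r*s) := by
    rw [segment_eq_Icc (by linarith : -(r*s) ≤ r*s)]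
    exact ⟨hc1, hc2⟩
  have hmax : F c ≤ max (F (-(r*s))) (F (r*s)) := hconv.le_on_segment hmem1 hmem2 hcseg
  -- evaluations
  have hsq : ∀ x : ℝ, 0 ≤ x → ((x^(2:ℕ) : ℝ))^(q₀/2) = x ^ q₀ := by
    intro x hx
    rw [← Real.rpow_natCast x 2, ← Real.rpow_mul hx]
    congr 1
    push_cast
    ring
  have hr1 : r ^ (q₀ - 2) * r = r ^ (q₀ - 1) := by
    rw [show q₀ - 1 = q₀ - 2 + 1 by ring, Real.rpow_add_one hr.ne']
  have hFc : F c = ‖a + b‖ ^ q₀ - q₀ * r^(q₀-2) * c := by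
    simp only [hFdef, Function.comp_apply, hgval]
    have h1 : ‖a + b‖^(2:ℕ) = r^2+s^2+2*c := by
      rw [norm_add_sq_real]; ring
    rw [← h1, hsq _ (norm_nonneg _)]
    ring
  have heval2 : F (r*s) = (r+s)^q₀ - q₀ * r^(q₀-1) * s := by
    simp only [hFdef, Function.comp_apply, hgval]
    rw [show r^2+s^2+2*(r*s) = (r+s)^(2:ℕ) by ring, hsq (r+s) (by positivity)]
    rw [← hr1]; ring
  have heval1 : F (-(r*s)) = |r-s|^q₀ + q₀ * r^(q₀-1) * s := by
    simp only [hFdef, Function.comp_apply, hgval]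
    rw [show r^2+s^2+2*(-(r*s)) = |r-s|^(2:ℕ) by rw [sq_abs]; ring, hsq _ (abs_nonneg _)]
    rw [← hr1]; ring
  have hend1 := endpoint1 hq₀ hr hs
  have hend2 := endpoint2 hq₀ hr hs
  have hbig : F c ≤ r ^ q₀ + q₀ * (q₀ - 1) * (2:ℝ) ^ (q₀ - 4) * (r^(q₀-2) * s^2 + s^q₀) :=
    hmax.trans (max_le (by rw [heval1]; exact hend2) (by rw [heval2]; exact hend1))
  rw [hFc] at hbig
  linarith
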